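/- arXiv:1910.07512 — 7 statements merged into one kernel-verified Lean document; each statement's English description precedes it below -/
import Mathlib

section
/- Let Hxx, Hxy, Hyx, Hyy be real matrix blocks of sizes n×n, n×m, m×n, m×m respectively with Hyx = Hxyᵀ, Hxx and Hyy symmetric, Hyy invertible, and let c > 0, η > 0. Define P = [[I, 0], [−Hyy⁻¹Hyx, I]] and Q = [[Hxx, Hxy], [−c·Hyx, −c·Hyy]]. Then the matrix J = I − η·P·Q is similar (via conjugation by [[I, 0], [Hyy⁻¹Hyx, I]]) to the block upper triangular matrix I − η·[[Hxx − Hxy·Hyy⁻¹·Hyx, Hxy], [0, −c·Hyy]]. -/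
open Matrix

/-- The Follow-the-Ridge Jacobian `J = I − η P Q`, with
`P = [[I, 0], [−Hyy⁻¹Hyx, I]]` and `Q = [[Hxx, Hxy], [−c Hyx, −c Hyy]]`, is similar
via conjugation by `S = [[I, 0], [Hyy⁻¹Hyx, I]]` to the block upper triangular matrix
`I − η [[Hxx − Hxy Hyy⁻¹ Hyx, Hxy], [0, −c Hyy]]`. -/
theorem fr_jacobian_similar_blockTriangular {n m : ℕ}
    (Hxx : Matrix (Fin n) (Fin n) ℝ) (Hxy : Matrix (Fin n) (Fin m) ℝ)
    (Hyx : Matrix (Fin m) (Fin n) ℝ) (Hyy : Matrix (Fin m) (Fin m) ℝ)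
    (hyx : Hyx = Hxyᵀ) (hxx : Hxxᵀ = Hxx) (hyy : Hyyᵀ = Hyy) (hinv : IsUnit Hyy)
    (c η : ℝ) (hc : 0 < c) (hη : 0 < η) :
    let P : Matrix (Fin n ⊕ Fin m) (Fin n ⊕ Fin m) ℝ :=
      fromBlocks 1 0 (-(Hyy⁻¹ * Hyx)) 1
    let Q : Matrix (Fin n ⊕ Fin m) (Fin n ⊕ Fin m) ℝ :=
      fromBlocks Hxx Hxy (-(c • Hyx)) (-(c • Hyy))
    let J : Matrix (Fin n ⊕ Fin m) (Fin n ⊕ Fin m) ℝ := 1 - η • (P * Q)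
    let S : Matrix (Fin n ⊕ Fin m) (Fin n ⊕ Fin m) ℝ :=
      fromBlocks 1 0 (Hyy⁻¹ * Hyx) 1
    IsUnit S ∧
      S * J * S⁻¹ =
        1 - η • fromBlocks (Hxx - Hxy * Hyy⁻¹ * Hyx) Hxy 0 (-(c • Hyy)) := by
  intro P Q J S
  have hSP : S * P = 1 := by
    show fromBlocks 1 0 (Hyy⁻¹ * Hyx) 1 * fromBlocks 1 0 (-(Hyy⁻¹ * Hyx)) 1 = 1
    rw [Matrix.fromBlocks_multiply]
    simp [← Matrix.fromBlocks_one]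
  have hPS : P * S = 1 := by
    show fromBlocks 1 0 (-(Hyy⁻¹ * Hyx)) 1 * fromBlocks 1 0 (Hyy⁻¹ * Hyx) 1 = 1
    rw [Matrix.fromBlocks_multiply]
    simp [← Matrix.fromBlocks_one]
  have hS : IsUnit S := ⟨⟨S, P, hSP, hPS⟩, rfl⟩
  refine ⟨hS, ?_⟩
  have hSinv : S⁻¹ = P := Matrix.inv_eq_right_inv hSP
  have hdet : IsUnit Hyy.det := (Matrix.isUnit_iff_isUnit_det _).mp hinv
  have hHyy : Hyy * (Hyy⁻¹ * Hyx) = Hyx := by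
    rw [← Matrix.mul_assoc, Matrix.mul_nonsing_inv _ hdet, Matrix.one_mul]
  have hQP : Q * P = fromBlocks (Hxx - Hxy * Hyy⁻¹ * Hyx) Hxy 0 (-(c • Hyy)) := by
    show fromBlocks Hxx Hxy (-(c • Hyx)) (-(c • Hyy)) * fromBlocks 1 0 (-(Hyy⁻¹ * Hyx)) 1 = _
    rw [Matrix.fromBlocks_multiply]
    simp [sub_eq_add_neg, Matrix.mul_assoc, Matrix.mul_neg, Matrix.smul_mul, hHyy]
  calc S * J * S⁻¹ = S * (1 - η • (P * Q)) * P := by rw [hSinv]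
    _ = S * P - η • (S * P * (Q * P)) := by
        rw [Matrix.mul_sub, Matrix.sub_mul, Matrix.mul_one, Matrix.mul_smul, Matrix.smul_mul]
        simp only [Matrix.mul_assoc]
    _ = 1 - η • (Q * P) := by rw [hSP, Matrix.one_mul]
    _ = _ := by rw [hQP]
end

section
/- Under the setup of the previous similarity (Hyx = Hxyᵀ, Hxx, Hyy symmetric, Hyy invertible, c, η > 0), all eigenvalues of J = I − η·[[I,0],[−Hyy⁻¹Hyx, I]]·[[Hxx, Hxy],[−c·Hyx, −c·Hyy]] are real, and they are exactly the eigenvalues of I − η(Hxx − Hxy·Hyy⁻¹·Hyx) together with the eigenvalues of I + cη·Hyy. -/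
open Matrix Polynomial

section Aux
variable {k : Type*} [Fintype k] [DecidableEq k]

lemma my_charpoly_conj {R : Type*} [CommRing R] (P A P' : Matrix k k R)
    (h : P * P' = 1) : (P * A * P').charpoly = A.charpoly := by
  have hC : P.map C * P'.map C = 1 := by
    rw [← Matrix.map_mul, h, Matrix.map_one _ (map_zero C) (map_one C)]
  have hcm : charmatrix (P * A * P') = P.map C * charmatrix A * P'.map C := by
    rw [charmatrix, charmatrix]
    rw [mul_sub, sub_mul]
    congr 1
    · rw [mul_assoc, (scalar_commute (X : R[X]) (Commute.all _) (P'.map C)).eq,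
        ← mul_assoc, hC, one_mul]
    · simp only [RingHom.mapMatrix_apply, Matrix.map_mul]
  have h2 : P' * P = 1 := mul_eq_one_comm.mp h
  unfold Matrix.charpoly
  rw [hcm, det_mul, det_mul, mul_comm, ← mul_assoc, ← det_mul, ← Matrix.map_mul, h2,
    Matrix.map_one _ (map_zero C) (map_one C), det_one, one_mul]

lemma my_eval_charpoly (A : Matrix k k ℂ) (μ : ℂ) :
    A.charpoly.eval μ = (Matrix.scalar k μ - A).det := by
  rw [Matrix.charpoly, eval_det, matPolyEquiv_charmatrix]
  simp

lemma my_mem_spectrum_root (A : Matrix k k ℂ) (μ : ℂ)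
    (h : μ ∈ spectrum ℂ A) : A.charpoly.eval μ = 0 := by
  rw [my_eval_charpoly]
  by_contra hne
  apply spectrum.mem_iff.mp h
  rw [Matrix.isUnit_iff_isUnit_det]
  convert isUnit_iff_ne_zero.mpr hne using 2 <;> rfl

lemma my_hermitian_spectrum_real (A : Matrix k k ℂ) (hA : A.IsHermitian)
    (μ : ℂ) (hμ : μ ∈ spectrum ℂ A) : μ.im = 0 := by
  rw [hA.spectral_theorem, Unitary.conjStarAlgAut_apply, Unitary.spectrum_star_right_conjugate, spectrum_diagonal] at hμ
  obtain ⟨i, hi⟩ := hμ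
  simp only [Function.comp_apply] at hi
  rw [← hi]
  simp

lemma my_sym_map_hermitian (B : Matrix k k ℝ) (hB : Bᵀ = B) :
    (B.map (algebraMap ℝ ℂ)).IsHermitian := by
  have hs : ∀ i j, B j i = B i j := fun i j =>
    (Matrix.transpose_apply B i j).symm.trans (by rw [hB])
  ext i j
  simp [Matrix.conjTranspose_apply, Complex.ext_iff, hs i j]

lemma my_root_mem_spectrum (A : Matrix k k ℂ) (μ : ℂ)
    (h : A.charpoly.eval μ = 0) : μ ∈ spectrum ℂ A := by
  rw [spectrum.mem_iff]
  rw [my_eval_charpoly] at h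
  intro hu
  rw [Matrix.isUnit_iff_isUnit_det] at hu
  rw [isUnit_iff_ne_zero] at hu
  apply hu
  convert h using 2
  rfl

lemma my_real_sym_spectrum_real (B : Matrix k k ℝ) (hB : Bᵀ = B) (μ : ℂ)
    (h : (B.charpoly.map (algebraMap ℝ ℂ)).eval μ = 0) : μ.im = 0 := by
  apply my_hermitian_spectrum_real _ (my_sym_map_hermitian B hB)
  apply my_root_mem_spectrum
  rwa [Matrix.charpoly_map]

lemma my_fromBlocks_sub {R n m : Type*} [AddGroup R]
    (A A' : Matrix n n R) (B B' : Matrix n m R) (C C' : Matrix m n R) (D D' : Matrix m m R) :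
    fromBlocks A B C D - fromBlocks A' B' C' D' =
      fromBlocks (A - A') (B - B') (C - C') (D - D') := by
  rw [sub_eq_add_neg, fromBlocks_neg, fromBlocks_add]
  simp [sub_eq_add_neg]

end Aux

/-- All eigenvalues of the Follow-the-Ridge Jacobian `J` are real, and they are exactly
the eigenvalues of `I − η(Hxx − Hxy Hyy⁻¹ Hyx)` together with those of `I + cη Hyy`:
`J.charpoly` factors accordingly, and all complex roots of `J.charpoly` are real. -/
theorem fr_jacobian_eigenvalues_real {n m : ℕ}
    (Hxx : Matrix (Fin n) (Fin n) ℝ) (Hxy : Matrix (Fin n) (Fin m) ℝ)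
    (Hyx : Matrix (Fin m) (Fin n) ℝ) (Hyy : Matrix (Fin m) (Fin m) ℝ)
    (hyx : Hyx = Hxyᵀ) (hxx : Hxxᵀ = Hxx) (hyy : Hyyᵀ = Hyy) (hinv : IsUnit Hyy)
    (c η : ℝ) (hc : 0 < c) (hη : 0 < η) :
    let J : Matrix (Fin n ⊕ Fin m) (Fin n ⊕ Fin m) ℝ :=
      1 - η • (fromBlocks 1 0 (-(Hyy⁻¹ * Hyx)) 1 *
        fromBlocks Hxx Hxy (-(c • Hyx)) (-(c • Hyy)))
    J.charpoly =
        ((1 : Matrix (Fin n) (Fin n) ℝ) - η • (Hxx - Hxy * Hyy⁻¹ * Hyx)).charpoly *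
          ((1 : Matrix (Fin m) (Fin m) ℝ) + (c * η) • Hyy).charpoly ∧
      ∀ μ ∈ spectrum ℂ (J.map (algebraMap ℝ ℂ)), μ.im = 0 := by
  intro J
  have hdet : IsUnit Hyy.det := (Matrix.isUnit_iff_isUnit_det Hyy).mp hinv
  have hHyyinv : Hyy * Hyy⁻¹ = 1 := Matrix.mul_nonsing_inv Hyy hdet
  set L : Matrix (Fin n ⊕ Fin m) (Fin n ⊕ Fin m) ℝ :=
    fromBlocks 1 0 (-(Hyy⁻¹ * Hyx)) 1 with hL
  set L' : Matrix (Fin n ⊕ Fin m) (Fin n ⊕ Fin m) ℝ :=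
    fromBlocks 1 0 (Hyy⁻¹ * Hyx) 1 with hL'
  set M : Matrix (Fin n ⊕ Fin m) (Fin n ⊕ Fin m) ℝ :=
    fromBlocks Hxx Hxy (-(c • Hyx)) (-(c • Hyy)) with hM
  have hLL' : L * L' = 1 := by
    rw [hL, hL', fromBlocks_multiply]
    simp [← fromBlocks_one]
  have hJ : J = L * (1 - η • (M * L)) * L' := by
    rw [mul_sub, sub_mul, mul_one]
    rw [mul_smul_comm, Matrix.smul_mul, hLL']
    congr 1
    rw [← mul_assoc, mul_assoc (L * M) L L', hLL', mul_one]
  have h1 : Hyy * (Hyy⁻¹ * Hyx) = Hyx := by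
    rw [← Matrix.mul_assoc, hHyyinv, Matrix.one_mul]
  have hML : M * L = fromBlocks (Hxx - Hxy * Hyy⁻¹ * Hyx) Hxy 0 (-(c • Hyy)) := by
    rw [hM, hL, fromBlocks_multiply]
    simp [smul_mul_assoc, h1, Matrix.mul_assoc, sub_eq_add_neg]
  have hfact : J.charpoly =
      ((1 : Matrix (Fin n) (Fin n) ℝ) - η • (Hxx - Hxy * Hyy⁻¹ * Hyx)).charpoly *
        ((1 : Matrix (Fin m) (Fin m) ℝ) + (c * η) • Hyy).charpoly := by
    have hb : (1 : Matrix (Fin n ⊕ Fin m) (Fin n ⊕ Fin m) ℝ) -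
        η • fromBlocks (Hxx - Hxy * Hyy⁻¹ * Hyx) Hxy 0 (-(c • Hyy)) =
        fromBlocks ((1 : Matrix (Fin n) (Fin n) ℝ) - η • (Hxx - Hxy * Hyy⁻¹ * Hyx))
          (-(η • Hxy)) 0 ((1 : Matrix (Fin m) (Fin m) ℝ) + (c * η) • Hyy) := by
      rw [← fromBlocks_one, fromBlocks_smul, my_fromBlocks_sub, zero_sub, smul_zero,
        sub_zero, smul_neg, sub_neg_eq_add, smul_smul, mul_comm η c]
    rw [hJ, my_charpoly_conj _ _ _ hLL', hML, hb, Matrix.charpoly_fromBlocks_zero₂₁]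
  refine ⟨hfact, ?_⟩
  intro μ hμ
  have hev := my_mem_spectrum_root _ μ hμ
  rw [Matrix.charpoly_map, hfact, Polynomial.map_mul, eval_mul, mul_eq_zero] at hev
  have hsym1 : ((1 : Matrix (Fin n) (Fin n) ℝ) - η • (Hxx - Hxy * Hyy⁻¹ * Hyx))ᵀ =
      (1 : Matrix (Fin n) (Fin n) ℝ) - η • (Hxx - Hxy * Hyy⁻¹ * Hyx) := by
    have hinvT : (Hyy⁻¹)ᵀ = Hyy⁻¹ := by rw [Matrix.transpose_nonsing_inv, hyy]
    simp [Matrix.transpose_sub, Matrix.transpose_smul, Matrix.transpose_mul, hinvT,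
      hxx, hyx, Matrix.mul_assoc]
  have hsym2 : ((1 : Matrix (Fin m) (Fin m) ℝ) + (c * η) • Hyy)ᵀ =
      (1 : Matrix (Fin m) (Fin m) ℝ) + (c * η) • Hyy := by
    simp [Matrix.transpose_add, Matrix.transpose_smul, hyy]
  rcases hev with h | h
  · exact my_real_sym_spectrum_real _ hsym1 μ h
  · exact my_real_sym_spectrum_real _ hsym2 μ h
end

section
/- Suppose Hyy ⪯ 0 (negative semidefinite), Hxx − Hxy·Hyy⁻¹·Hyx ⪰ 0, Hyy invertible, and 0 < η < 2/max{ρ(Hxx − Hxy·Hyy⁻¹·Hyx), c·ρ(−Hyy)} with c > 0. Then the spectral radius of the Follow-the-Ridge Jacobian J = I − η[[I,0],[−Hyy⁻¹Hyx, I]][[Hxx, Hxy],[−c·Hyx, −c·Hyy]] satisfies ρ(J) ≤ 1. -/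
open Matrix
open scoped ComplexOrder

/-- The spectral radius of a real square matrix: the supremum of the moduli of its
complex eigenvalues. -/
noncomputable def specRad {k : ℕ} (M : Matrix (Fin k) (Fin k) ℝ) : ℝ :=
  sSup ((fun z : ℂ => ‖z‖) '' spectrum ℂ (M.map (algebraMap ℝ ℂ)))

lemma mem_spec_iff_det {ι : Type*} [Fintype ι] [DecidableEq ι]
    (A : Matrix ι ι ℂ) (μ : ℂ) :
    μ ∈ spectrum ℂ A ↔ (μ • (1 : Matrix ι ι ℂ) - A).det = 0 := by
  rw [spectrum.mem_iff, Matrix.isUnit_iff_isUnit_det, isUnit_iff_ne_zero, not_not,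
    Algebra.algebraMap_eq_smul_one]

lemma posSemidef_map {k : ℕ} {M : Matrix (Fin k) (Fin k) ℝ} (hM : M.PosSemidef) :
    (M.map (algebraMap ℝ ℂ)).PosSemidef := by
  obtain ⟨B, rfl⟩ : ∃ B : Matrix (Fin k) (Fin k) ℝ, M = Bᴴ * B := by
    open scoped MatrixOrder in
    obtain ⟨B, rfl⟩ := CStarAlgebra.nonneg_iff_eq_star_mul_self.mp hM.nonneg
    exact ⟨B, rfl⟩
  have h : (Bᴴ * B).map (algebraMap ℝ ℂ) =
      (B.map (algebraMap ℝ ℂ))ᴴ * (B.map (algebraMap ℝ ℂ)) := by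
    rw [Matrix.map_mul]
    congr 1
    ext i j
    simp [Matrix.conjTranspose_apply, Matrix.map_apply]
  rw [h]
  exact Matrix.posSemidef_conjTranspose_mul_self _

lemma spec_psd {k : ℕ} {M : Matrix (Fin k) (Fin k) ℝ} (hM : M.PosSemidef)
    {μ : ℂ} (hμ : μ ∈ spectrum ℂ (M.map (algebraMap ℝ ℂ))) :
    ∃ r : ℝ, μ = (r : ℂ) ∧ 0 ≤ r ∧ r ≤ specRad M := by
  have hpsd := posSemidef_map hM
  have hherm := hpsd.1
  have hspec : spectrum ℂ (M.map (algebraMap ℝ ℂ)) =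
      Set.range (fun i => (hherm.eigenvalues i : ℂ)) := by
    rw [hherm.spectrum_eq_image_range]
    ext x
    simp [Set.range_comp]
  obtain ⟨i, hi⟩ := hspec ▸ hμ
  have habs : ‖μ‖ ≤ specRad M := by
    apply le_csSup (((Matrix.finite_spectrum _).image _).bddAbove)
    exact ⟨μ, hμ, rfl⟩
  refine ⟨hherm.eigenvalues i, hi.symm, hpsd.eigenvalues_nonneg i, ?_⟩
  have : ‖μ‖ = hherm.eigenvalues i := by
    rw [← hi, Complex.norm_real, Real.norm_eq_abs, abs_of_nonneg (hpsd.eigenvalues_nonneg i)]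
  linarith [habs]


/-- If `Hyy ⪯ 0`, the Schur complement `Hxx − Hxy Hyy⁻¹ Hyx ⪰ 0`, `Hyy` is invertible,
and `0 < η < 2 / max{ρ(Hxx − Hxy Hyy⁻¹ Hyx), c·ρ(−Hyy)}`, then the spectral radius of
the Follow-the-Ridge Jacobian is at most `1`. -/
theorem fr_jacobian_spectral_radius_le_one {n m : ℕ}
    (Hxx : Matrix (Fin n) (Fin n) ℝ) (Hxy : Matrix (Fin n) (Fin m) ℝ)
    (Hyx : Matrix (Fin m) (Fin n) ℝ) (Hyy : Matrix (Fin m) (Fin m) ℝ)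
    (hyx : Hyx = Hxyᵀ) (hxx : Hxxᵀ = Hxx) (hyy : Hyyᵀ = Hyy) (hinv : IsUnit Hyy)
    (hyyNeg : (-Hyy).PosSemidef) (hschur : (Hxx - Hxy * Hyy⁻¹ * Hyx).PosSemidef)
    (c η : ℝ) (hc : 0 < c) (hη : 0 < η)
    (hη2 : η < 2 / max (specRad (Hxx - Hxy * Hyy⁻¹ * Hyx)) (c * specRad (-Hyy))) :
    ∀ μ ∈ spectrum ℂ
      ((1 - η • (fromBlocks (1 : Matrix (Fin n) (Fin n) ℝ) 0 (-(Hyy⁻¹ * Hyx)) 1 *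
          fromBlocks Hxx Hxy (-(c • Hyx)) (-(c • Hyy)))).map (algebraMap ℝ ℂ)),
      ‖μ‖ ≤ 1 := by
  intro μ hμ
  classical
  set f := algebraMap ℝ ℂ with hf
  set S : Matrix (Fin n) (Fin n) ℝ := Hxx - Hxy * Hyy⁻¹ * Hyx with hS
  set Mx : ℝ := max (specRad S) (c * specRad (-Hyy)) with hMx
  -- the max is positive and η * Mx < 2
  have hMxpos : 0 < Mx := by
    by_contra h
    push_neg at h
    have h2 : 2 / Mx ≤ 0 := div_nonpos_of_nonneg_of_nonpos (by norm_num) h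
    linarith
  have hηM : η * Mx < 2 := (lt_div_iff₀ hMxpos).mp hη2
  set L : Matrix (Fin n ⊕ Fin m) (Fin n ⊕ Fin m) ℝ :=
    fromBlocks (1 : Matrix (Fin n) (Fin n) ℝ) 0 (-(Hyy⁻¹ * Hyx)) 1 with hL
  set Hm : Matrix (Fin n ⊕ Fin m) (Fin n ⊕ Fin m) ℝ :=
    fromBlocks Hxx Hxy (-(c • Hyx)) (-(c • Hyy)) with hHm
  set lam : ℂ := (1 - μ) / (η : ℂ) with hlam
  have hηC : (η : ℂ) ≠ 0 := Complex.ofReal_ne_zero.mpr hη.ne'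
  have hηlam : (η : ℂ) * lam = 1 - μ := by
    rw [hlam]; field_simp
  clear_value lam
  clear hlam
  -- determinant characterization
  have hdet0 : ((μ : ℂ) • (1 : Matrix (Fin n ⊕ Fin m) (Fin n ⊕ Fin m) ℂ) -
      (1 - η • (L * Hm)).map f).det = 0 := (mem_spec_iff_det _ _).mp hμ
  have key : (μ : ℂ) • (1 : Matrix (Fin n ⊕ Fin m) (Fin n ⊕ Fin m) ℂ) -
      (1 - η • (L * Hm)).map f = (-(η : ℂ)) • (lam • 1 - (L * Hm).map f) := by
    ext i j
    by_cases hij : i = j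
    · subst hij
      simp only [Matrix.sub_apply, Matrix.smul_apply, Matrix.one_apply_eq, Matrix.map_apply,
        smul_eq_mul, mul_one, hf, Complex.coe_algebraMap]
      push_cast
      linear_combination hηlam
    · simp only [Matrix.sub_apply, Matrix.smul_apply, Matrix.one_apply_ne hij, Matrix.map_apply,
        smul_eq_mul, mul_zero, hf, Complex.coe_algebraMap]
      push_cast
      ring
  rw [key, Matrix.det_smul] at hdet0
  have hdet1 : (lam • (1 : Matrix (Fin n ⊕ Fin m) (Fin n ⊕ Fin m) ℂ) - (L * Hm).map f).det = 0 := by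
    rcases mul_eq_zero.mp hdet0 with h | h
    · exact absurd h (pow_ne_zero _ (neg_ne_zero.mpr hηC))
    · exact h
  -- swap to Hm * L
  set Lc := L.map f with hLc
  set Hc := Hm.map f with hHc
  have hmm : (L * Hm).map f = Lc * Hc := Matrix.map_mul
  have hmm2 : (Hm * L).map f = Hc * Lc := Matrix.map_mul
  have hdetLc : Lc.det = 1 := by
    rw [hLc, hL, Matrix.fromBlocks_map, Matrix.map_zero _ (map_zero f),
      Matrix.map_one _ (map_zero f) (map_one f), Matrix.map_one _ (map_zero f) (map_one f),
      Matrix.det_fromBlocks_zero₁₂]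
    simp
  have hswap : (lam • (1 : Matrix (Fin n ⊕ Fin m) (Fin n ⊕ Fin m) ℂ) - Hc * Lc).det = 0 := by
    have h1 : Lc * (lam • 1 - Hc * Lc) = (lam • 1 - Lc * Hc) * Lc := by
      rw [Matrix.mul_sub, Matrix.sub_mul, Matrix.mul_smul, Matrix.smul_mul, mul_one, one_mul,
        mul_assoc]
    have h2 := congrArg Matrix.det h1
    rw [Matrix.det_mul, Matrix.det_mul, hdetLc, one_mul, mul_one] at h2
    rw [h2, ← hmm, hdet1]
  -- compute Hm * L
  have hdetHyy : IsUnit Hyy.det := (Matrix.isUnit_iff_isUnit_det Hyy).mp hinv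
  have hHL : Hm * L = fromBlocks S Hxy 0 (-(c • Hyy)) := by
    have hcan : Hyy * (Hyy⁻¹ * Hyx) = Hyx := Matrix.mul_nonsing_inv_cancel_left _ _ hdetHyy
    have b11 : Hxx * (1 : Matrix (Fin n) (Fin n) ℝ) + Hxy * -(Hyy⁻¹ * Hyx) = S := by
      rw [Matrix.mul_one, Matrix.mul_neg, ← Matrix.mul_assoc, ← sub_eq_add_neg]
    have b12 : Hxx * (0 : Matrix (Fin n) (Fin m) ℝ) + Hxy * (1 : Matrix (Fin m) (Fin m) ℝ)
        = Hxy := by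
      rw [Matrix.mul_zero, zero_add, Matrix.mul_one]
    have b21 : -(c • Hyx) * (1 : Matrix (Fin n) (Fin n) ℝ) + -(c • Hyy) * -(Hyy⁻¹ * Hyx)
        = 0 := by
      rw [Matrix.mul_one, Matrix.neg_mul, Matrix.mul_neg, neg_neg, Matrix.smul_mul, hcan,
        neg_add_cancel]
    have b22 : -(c • Hyx) * (0 : Matrix (Fin n) (Fin m) ℝ) + -(c • Hyy) * (1 : Matrix (Fin m) (Fin m) ℝ)
        = -(c • Hyy) := by
      rw [Matrix.mul_zero, zero_add, Matrix.mul_one]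
    rw [hHm, hL, Matrix.fromBlocks_multiply, b11, b12, b21, b22]
  -- block triangular determinant
  have hdet2 : (lam • (1 : Matrix (Fin n) (Fin n) ℂ) - S.map f).det *
      (lam • (1 : Matrix (Fin m) (Fin m) ℂ) - (-(c • Hyy)).map f).det = 0 := by
    have e1 : (Hm * L).map f = fromBlocks (S.map f) (Hxy.map f) 0 ((-(c • Hyy)).map f) := by
      rw [hHL, Matrix.fromBlocks_map, Matrix.map_zero _ (map_zero f)]
    have e2 : lam • (1 : Matrix (Fin n ⊕ Fin m) (Fin n ⊕ Fin m) ℂ) - (Hm * L).map f =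
        fromBlocks (lam • 1 - S.map f) (0 - Hxy.map f) 0 (lam • 1 - (-(c • Hyy)).map f) := by
      rw [e1, ← Matrix.fromBlocks_one, Matrix.fromBlocks_smul, sub_eq_add_neg,
        Matrix.fromBlocks_neg, Matrix.fromBlocks_add]
      congr 1 <;> simp [sub_eq_add_neg]
    rw [← Matrix.det_fromBlocks_zero₂₁ (lam • 1 - S.map f) (0 - Hxy.map f)
      (lam • 1 - (-(c • Hyy)).map f), ← e2, hmm2]
    exact hswap
  -- extract a real eigenvalue t with 0 ≤ t ≤ Mx and μ = 1 - η t
  obtain ⟨t, hμt, ht0, htM⟩ : ∃ t : ℝ, lam = (t : ℂ) ∧ 0 ≤ t ∧ t ≤ Mx := by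
    rcases mul_eq_zero.mp hdet2 with h | h
    · obtain ⟨r, hr, hr0, hrS⟩ := spec_psd hschur ((mem_spec_iff_det _ _).mpr h)
      exact ⟨r, hr, hr0, le_trans hrS (le_max_left _ _)⟩
    · -- scale out c
      have hcC : (c : ℂ) ≠ 0 := Complex.ofReal_ne_zero.mpr hc.ne'
      have hmap : (-(c • Hyy)).map f = (c : ℂ) • ((-Hyy).map f) := by
        ext i j
        simp [Matrix.map_apply, hf]
      have hsc : ((lam / c) • (1 : Matrix (Fin m) (Fin m) ℂ) - (-Hyy).map f).det = 0 := by
        have e3 : lam • (1 : Matrix (Fin m) (Fin m) ℂ) - (-(c • Hyy)).map f =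
            (c : ℂ) • ((lam / c) • 1 - (-Hyy).map f) := by
          rw [hmap, smul_sub, smul_smul]
          congr 2
          field_simp
        rw [e3, Matrix.det_smul] at h
        rcases mul_eq_zero.mp h with h' | h'
        · exact absurd h' (pow_ne_zero _ hcC)
        · exact h'
      obtain ⟨r, hr, hr0, hrS⟩ := spec_psd hyyNeg ((mem_spec_iff_det _ _).mpr hsc)
      refine ⟨c * r, ?_, by positivity, ?_⟩
      · have : lam = (c : ℂ) * (r : ℂ) := by
          rw [← hr]; field_simp
        rw [this]; push_cast; ring
      · calc c * r ≤ c * specRad (-Hyy) := by nlinarith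
          _ ≤ Mx := le_max_right _ _
  have hμval : μ = ((1 - η * t : ℝ) : ℂ) := by
    have : μ = 1 - (η : ℂ) * lam := by linear_combination hηlam
    rw [this, hμt]; push_cast; ring
  rw [hμval, Complex.norm_real, Real.norm_eq_abs]
  have h1 : η * t < 2 := by
    have : η * t ≤ η * Mx := by nlinarith
    linarith
  have h2 : 0 ≤ η * t := by positivity
  rw [abs_le]
  constructor <;> linarith
end

section
/- Suppose Hyy is symmetric and invertible, Hxx symmetric, Hyx = Hxyᵀ, c > 0, η > 0, and the Follow-the-Ridge Jacobian J = I − η[[I,0],[−Hyy⁻¹Hyx, I]][[Hxx, Hxy],[−c·Hyx, −c·Hyy]] has spectral radius ρ(J) < 1. Then Hyy ≺ 0 and Hxx − Hxy·Hyy⁻¹·Hyx ≻ 0. -/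
open Matrix

lemma my_posDef_of_spectrum_pos {k : ℕ} {A : Matrix (Fin k) (Fin k) ℝ} (hA : A.IsHermitian)
    (h : ∀ μ ∈ spectrum ℝ A, 0 < μ) : A.PosDef := by
  have he : ∀ i, 0 < hA.eigenvalues i := fun i => h _ (hA.eigenvalues_mem_spectrum_real i)
  exact hA.posDef_iff_eigenvalues_pos.mpr he

/-- membership in real spectrum gives vanishing determinant -/
lemma my_det_eq_zero_of_spectrum {k : ℕ} {A : Matrix (Fin k) (Fin k) ℝ} {μ : ℝ}
    (h : μ ∈ spectrum ℝ A) : (μ • (1 : Matrix (Fin k) (Fin k) ℝ) - A).det = 0 := by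
  rw [spectrum.mem_iff] at h
  rw [Algebra.algebraMap_eq_smul_one] at h
  by_contra hd
  exact h ((Matrix.isUnit_iff_isUnit_det _).mpr (isUnit_iff_ne_zero.mpr hd))

/-- If the Follow-the-Ridge Jacobian has spectral radius `< 1` (all complex eigenvalues
of modulus `< 1`), with `Hxx`, `Hyy` symmetric, `Hyy` invertible, `Hyx = Hxyᵀ`, `c, η > 0`,
then `Hyy ≺ 0` and the Schur complement `Hxx − Hxy Hyy⁻¹ Hyx ≻ 0`. -/
theorem fr_strict_stability_implies_local_minimax {n m : ℕ}
    (Hxx : Matrix (Fin n) (Fin n) ℝ) (Hxy : Matrix (Fin n) (Fin m) ℝ)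
    (Hyx : Matrix (Fin m) (Fin n) ℝ) (Hyy : Matrix (Fin m) (Fin m) ℝ)
    (hyx : Hyx = Hxyᵀ) (hxx : Hxxᵀ = Hxx) (hyy : Hyyᵀ = Hyy) (hinv : IsUnit Hyy)
    (c η : ℝ) (hc : 0 < c) (hη : 0 < η)
    (hspec : ∀ μ ∈ spectrum ℂ
      ((1 - η • (fromBlocks (1 : Matrix (Fin n) (Fin n) ℝ) 0 (-(Hyy⁻¹ * Hyx)) 1 *
          fromBlocks Hxx Hxy (-(c • Hyx)) (-(c • Hyy)))).map (algebraMap ℝ ℂ)),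
      ‖μ‖ < 1) :
    (-Hyy).PosDef ∧ (Hxx - Hxy * Hyy⁻¹ * Hyx).PosDef := by
  classical
  set S : Matrix (Fin n) (Fin n) ℝ := Hxx - Hxy * Hyy⁻¹ * Hyx with hSdef
  set L : Matrix (Fin n ⊕ Fin m) (Fin n ⊕ Fin m) ℝ := fromBlocks 1 0 (Hyy⁻¹ * Hyx) 1 with hLdef
  set L' : Matrix (Fin n ⊕ Fin m) (Fin n ⊕ Fin m) ℝ := fromBlocks 1 0 (-(Hyy⁻¹ * Hyx)) 1 with hL'def
  set T : Matrix (Fin n ⊕ Fin m) (Fin n ⊕ Fin m) ℝ := fromBlocks S Hxy 0 (-(c • Hyy)) with hTdef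
  set A : Matrix (Fin n ⊕ Fin m) (Fin n ⊕ Fin m) ℝ :=
    fromBlocks Hxx Hxy (-(c • Hyx)) (-(c • Hyy)) with hAdef
  set J : Matrix (Fin n ⊕ Fin m) (Fin n ⊕ Fin m) ℝ := 1 - η • (L' * A) with hJdef
  have hdetHyy : IsUnit Hyy.det := (Matrix.isUnit_iff_isUnit_det Hyy).mp hinv
  have hHyyinv : Hyy * Hyy⁻¹ = 1 := Matrix.mul_nonsing_inv _ hdetHyy
  -- T * L = A
  have hTL : T * L = A := by
    rw [hTdef, hLdef, hAdef, fromBlocks_multiply]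
    rw [Matrix.fromBlocks_inj]
    refine ⟨?_, by simp, ?_, by simp⟩
    · rw [hSdef]; rw [Matrix.mul_one]; rw [← Matrix.mul_assoc]; abel
    · rw [Matrix.zero_mul, zero_add, Matrix.neg_mul, Matrix.smul_mul, ← Matrix.mul_assoc,
        hHyyinv, Matrix.one_mul]
  -- L' * L = 1
  have hLL : L' * L = 1 := by
    rw [hL'def, hLdef, fromBlocks_multiply]
    rw [← fromBlocks_one, Matrix.fromBlocks_inj]
    refine ⟨by simp, by simp, by simp, by simp⟩
  -- key similarity
  have hJsim : ∀ z : ℝ, z • (1 : Matrix (Fin n ⊕ Fin m) (Fin n ⊕ Fin m) ℝ) - J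
      = L' * (z • 1 - (1 - η • T)) * L := by
    intro z
    have h1 : L' * (z • 1 - (1 - η • T)) * L
        = z • (L' * L) - (L' * L - η • (L' * (T * L))) := by
      simp only [mul_sub, sub_mul, mul_one, one_mul, mul_smul_comm, smul_mul_assoc, mul_assoc]
    rw [h1, hLL, hTL, hJdef]
  have hdetLL : L'.det * L.det = 1 := by
    have := congrArg Matrix.det hLL
    rwa [Matrix.det_mul, Matrix.det_one] at this
  -- determinant factorization
  have key : ∀ z : ℝ, (z • (1 : Matrix (Fin n ⊕ Fin m) (Fin n ⊕ Fin m) ℝ) - J).det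
      = ((z - 1) • (1 : Matrix (Fin n) (Fin n) ℝ) + η • S).det *
        ((z - 1) • (1 : Matrix (Fin m) (Fin m) ℝ) - (c * η) • Hyy).det := by
    intro z
    rw [hJsim z, Matrix.det_mul, Matrix.det_mul, mul_comm L'.det, mul_assoc, hdetLL, mul_one]
    have hX : z • (1 : Matrix (Fin n ⊕ Fin m) (Fin n ⊕ Fin m) ℝ) - (1 - η • T)
        = fromBlocks ((z - 1) • 1 + η • S) (η • Hxy) 0 ((z - 1) • 1 - (c * η) • Hyy) := by
      rw [hTdef]
      ext (i | i) (j | j) <;>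
        simp [Matrix.fromBlocks, Matrix.one_apply, Matrix.sub_apply, Matrix.add_apply,
          Matrix.smul_apply, Matrix.neg_apply, mul_ite, ite_add, add_ite, sub_ite, ite_sub] <;>
        split_ifs <;> ring
    rw [hX, Matrix.det_fromBlocks_zero₂₁]
  -- transfer to complex spectrum
  have hmem : ∀ z : ℝ, (z • (1 : Matrix (Fin n ⊕ Fin m) (Fin n ⊕ Fin m) ℝ) - J).det = 0 →
      (z : ℂ) ∈ spectrum ℂ (J.map (algebraMap ℝ ℂ)) := by
    intro z hz
    rw [spectrum.mem_iff, Algebra.algebraMap_eq_smul_one]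
    intro hU
    have hmap : (z : ℂ) • (1 : Matrix (Fin n ⊕ Fin m) (Fin n ⊕ Fin m) ℂ) - J.map (algebraMap ℝ ℂ)
        = (z • 1 - J).map (algebraMap ℝ ℂ) := by
      ext i j
      simp [Matrix.map_apply, Matrix.sub_apply, Matrix.smul_apply, Matrix.one_apply, apply_ite]
    rw [hmap, Matrix.isUnit_iff_isUnit_det, ← RingHom.mapMatrix_apply, ← RingHom.map_det] at hU
    rw [hz] at hU
    simp at hU
  -- main argument for each block
  have habs : ∀ z : ℝ, (z • (1 : Matrix (Fin n ⊕ Fin m) (Fin n ⊕ Fin m) ℝ) - J).det = 0 →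
      |z| < 1 := by
    intro z hz
    have := hspec _ (hmem z hz)
    rwa [Complex.norm_real, Real.norm_eq_abs] at this
  constructor
  · -- -Hyy posdef
    have hherm : (-Hyy).IsHermitian := by
      rw [Matrix.IsHermitian]
      rw [Matrix.conjTranspose_neg]
      rw [show (Hyy)ᴴ = Hyyᵀ from rfl, hyy]
    refine my_posDef_of_spectrum_pos hherm ?_
    intro μ hμ
    have hd : (μ • (1 : Matrix (Fin m) (Fin m) ℝ) - (-Hyy)).det = 0 :=
      my_det_eq_zero_of_spectrum hμ
    set z : ℝ := 1 - c * η * μ with hzdef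
    have hz2 : ((z - 1) • (1 : Matrix (Fin m) (Fin m) ℝ) - (c * η) • Hyy)
        = (-(c * η)) • (μ • (1 : Matrix (Fin m) (Fin m) ℝ) - (-Hyy)) := by
      rw [hzdef]
      module
    have hdet0 : (z • (1 : Matrix (Fin n ⊕ Fin m) (Fin n ⊕ Fin m) ℝ) - J).det = 0 := by
      rw [key z, hz2, Matrix.det_smul, hd]
      ring
    have := habs z hdet0
    rw [abs_lt] at this
    nlinarith [this.2, mul_pos hc hη]
  · -- Schur complement posdef
    have hherm : S.IsHermitian := by
      rw [Matrix.IsHermitian, show (S)ᴴ = Sᵀ from rfl, hSdef]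
      rw [Matrix.transpose_sub, hxx, Matrix.transpose_mul, Matrix.transpose_mul,
        Matrix.transpose_nonsing_inv, hyy, hyx]
      rw [Matrix.transpose_transpose, Matrix.mul_assoc]
    refine my_posDef_of_spectrum_pos hherm ?_
    intro μ hμ
    have hd : (μ • (1 : Matrix (Fin n) (Fin n) ℝ) - S).det = 0 :=
      my_det_eq_zero_of_spectrum hμ
    set z : ℝ := 1 - η * μ with hzdef
    have hz2 : ((z - 1) • (1 : Matrix (Fin n) (Fin n) ℝ) + η • S)
        = (-η) • (μ • (1 : Matrix (Fin n) (Fin n) ℝ) - S) := by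
      rw [hzdef]
      module
    have hdet0 : (z • (1 : Matrix (Fin n ⊕ Fin m) (Fin n ⊕ Fin m) ℝ) - J).det = 0 := by
      rw [key z, hz2, Matrix.det_smul, hd]
      ring
    have := habs z hdet0
    rw [abs_lt] at this
    nlinarith [this.2, hη]
end

section
/- For the quadratic function f(x,y) = 3x² + y² + 4xy on ℝ², the point (0,0) is the unique stationary point, and for any learning rate 0 < η < 1, the Jacobian of the gradient descent-ascent update (x,y) ↦ (x − η·∂f/∂x, y + η·∂f/∂y) at (0,0) has both eigenvalues equal to 1 − 2η, hence spectral radius strictly less than 1; yet ∂²f/∂y² = 2 > 0, so (0,0) is not a local maximum of f(0,·). -/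
open Matrix

/-- For `f(x,y) = 3x² + y² + 4xy`: `(0,0)` is the unique stationary point; for
`0 < η < 1` the GDA Jacobian `I − η·[[6,4],[−4,−2]]` at `(0,0)` has characteristic
polynomial `(X − (1−2η))²` (both eigenvalues equal `1 − 2η`) and spectral radius
`|1 − 2η| < 1`; yet `(0,0)` is not a local maximum of `f(0,·)`. -/
theorem gda_stable_fixed_point_not_local_minimax (η : ℝ) (hη0 : 0 < η) (hη1 : η < 1) :
    let f : ℝ → ℝ → ℝ := fun x y => 3 * x ^ 2 + y ^ 2 + 4 * x * y
    (∀ x y : ℝ, (deriv (fun x' => f x' y) x = 0 ∧ deriv (fun y' => f x y') y = 0) ↔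
        (x = 0 ∧ y = 0)) ∧
      ((1 : Matrix (Fin 2) (Fin 2) ℝ) - η • !![6, 4; -4, -2]).charpoly =
        (Polynomial.X - Polynomial.C (1 - 2 * η)) ^ 2 ∧
      |1 - 2 * η| < 1 ∧
      ¬ IsLocalMax (fun y => f 0 y) 0 := by
  intro f
  refine ⟨?_, ?_, ?_, ?_⟩
  · intro x y
    have h1 : deriv (fun x' => f x' y) x = 6 * x + 4 * y := by
      show deriv (fun x' => 3 * x' ^ 2 + y ^ 2 + 4 * x' * y) x = 6 * x + 4 * y
      have : HasDerivAt (fun x' => 3 * x' ^ 2 + y ^ 2 + 4 * x' * y) (6 * x + 4 * y) x := by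
        have := (((hasDerivAt_id x).pow 2).const_mul 3).add_const (y ^ 2)
        have h2 := (((hasDerivAt_id x).const_mul 4).mul_const y)
        convert this.add h2 using 1 <;> first | rfl | simp [id_eq] <;> ring
      exact this.deriv
    have h2 : deriv (fun y' => f x y') y = 2 * y + 4 * x := by
      show deriv (fun y' => 3 * x ^ 2 + y' ^ 2 + 4 * x * y') y = 2 * y + 4 * x
      have : HasDerivAt (fun y' => 3 * x ^ 2 + y' ^ 2 + 4 * x * y') (2 * y + 4 * x) y := by
        have := ((hasDerivAt_const y (3 * x ^ 2)).add ((hasDerivAt_id y).pow 2)).add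
          ((hasDerivAt_id y).const_mul (4 * x))
        convert this using 1 <;> first | rfl | simp [id_eq] <;> ring
      exact this.deriv
    rw [h1, h2]
    constructor
    · rintro ⟨a, b⟩; constructor <;> linarith
    · rintro ⟨rfl, rfl⟩; constructor <;> ring
  · rw [Matrix.charpoly, Matrix.det_fin_two]
    simp [Matrix.charmatrix_apply_eq, Matrix.charmatrix_apply_ne, Matrix.one_apply,
      Matrix.smul_apply, Matrix.sub_apply, map_sub, _root_.map_mul, _root_.map_add, _root_.map_one, map_ofNat]
    ring
  · rw [abs_lt]; constructor <;> linarith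
  · intro h
    rw [IsLocalMax, IsMaxFilter, Metric.eventually_nhds_iff] at h
    obtain ⟨ε, hε, hb⟩ := h
    have := hb (y := ε / 2) (by rw [Real.dist_eq, sub_zero, abs_of_pos (by linarith : (0:ℝ) < ε/2)]; linarith)
    simp only [f] at this
    nlinarith
end

section
/- For the quadratic function f(x,y) = −3x² − y² + 4xy on ℝ², the point (0,0) is a stationary point satisfying ∂²f/∂y² = −2 < 0 and the Schur complement ∂²f/∂x² − (∂²f/∂x∂y)(∂²f/∂y²)⁻¹(∂²f/∂y∂x) = −6 + 16/2 = 2 > 0 (second-order sufficient conditions for local minimax), yet for every η > 0 the Jacobian I − η·[[−6, 4], [−4, 2]] of gradient descent-ascent at (0,0) has spectral radius strictly greater than 1. -/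
open Matrix

/-- For `f(x,y) = −3x² − y² + 4xy`: `(0,0)` is a stationary point satisfying the
second-order sufficient conditions for local minimax (`∂²f/∂y² = −2 < 0` and Schur
complement `−6 − 4·(−2)⁻¹·4 = 2 > 0`), yet for every `η > 0` the GDA Jacobian
`I − η·[[−6,4],[−4,2]]` has an eigenvalue of modulus strictly greater than `1`. -/
theorem gda_fails_on_local_minimax :
    let f : ℝ → ℝ → ℝ := fun x y => -3 * x ^ 2 - y ^ 2 + 4 * x * y
    (deriv (fun x' => f x' 0) 0 = 0 ∧ deriv (fun y' => f 0 y') 0 = 0) ∧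
      deriv (deriv (fun y' => f 0 y')) 0 = -2 ∧ (-2 : ℝ) < 0 ∧
      ((-6 : ℝ) - 4 * (-2 : ℝ)⁻¹ * 4 = 2) ∧ (0 : ℝ) < 2 ∧
      ∀ η : ℝ, 0 < η →
        ∃ μ ∈ spectrum ℂ
          (((1 : Matrix (Fin 2) (Fin 2) ℝ) - η • !![-6, 4; -4, 2]).map (algebraMap ℝ ℂ)),
          1 < ‖μ‖ := by
  intro f
  have hx : (fun x' : ℝ => f x' 0) = fun x' => -3 * x' ^ 2 := by
    funext x; simp only [f]; ring
  have hy : (fun y' : ℝ => f 0 y') = fun y' => -(y' ^ 2) := by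
    funext y; simp only [f]; ring
  refine ⟨⟨?_, ?_⟩, ?_, by norm_num, by norm_num, by norm_num, ?_⟩
  · rw [hx]
    have : deriv (fun x' : ℝ => -3 * x' ^ 2) 0 = -3 * (2 * 0 ^ 1) := by
      simp [deriv_const_mul, deriv_pow]
    simpa using this
  · rw [hy]; simp [deriv_pow]
  · rw [hy]
    have h1 : deriv (fun y' : ℝ => -(y' ^ 2)) = fun y' => -(2 * y') := by
      funext y; simp [deriv_pow]
    rw [h1]
    have h2 : (fun y' : ℝ => -(2 * y')) = fun y' => y' * (-2) := by
      funext y; ring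
    rw [h2]
    simp
  · intro η hη
    refine ⟨(1 : ℂ) + 2 * η, ?_, ?_⟩
    · rw [spectrum.mem_iff]
      intro hu
      rw [Matrix.isUnit_iff_isUnit_det] at hu
      have hdet : (algebraMap ℂ (Matrix (Fin 2) (Fin 2) ℂ) ((1 : ℂ) + 2 * η) -
          ((1 : Matrix (Fin 2) (Fin 2) ℝ) - η • !![-6, 4; -4, 2]).map
            (algebraMap ℝ ℂ)).det = 0 := by
        rw [Matrix.det_fin_two]
        simp [Algebra.algebraMap_eq_smul_one, Matrix.smul_apply, Matrix.one_apply,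
          Matrix.map_apply, Matrix.sub_apply]
        ring
      rw [hdet] at hu
      exact hu.ne_zero rfl
    · have : ((1 : ℂ) + 2 * η) = ((1 + 2 * η : ℝ) : ℂ) := by push_cast; ring
      rw [this, Complex.norm_real, Real.norm_eq_abs, abs_of_pos (by linarith)]
      linarith
end

section
/- Let J₁ be an n×n real symmetric matrix whose eigenvalues all lie in [0, 1 − 1/(2κ²)] for some κ ≥ 2, and set γ = 1 + 1/(2κ²) − √2/κ. Then every eigenvalue λ of J₂ = [[γI + J₁, −γI], [I, 0]] satisfies |λ| = √γ ≤ 1 − 1/(2√2·κ). -/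
set_option maxHeartbeats 1000000

open Matrix

/-- If `J₁` is real symmetric with all eigenvalues in `[0, 1 − 1/(2κ²)]` for some `κ ≥ 2`,
and `γ = 1 + 1/(2κ²) − √2/κ`, then every eigenvalue `λ` of the momentum Jacobian
`J₂ = [[γI + J₁, −γI], [I, 0]]` satisfies `|λ| = √γ ≤ 1 − 1/(2√2·κ)`. -/
theorem momentum_jacobian_spectral_radius {n : ℕ} {κ : ℝ} (hκ : 2 ≤ κ)
    (J₁ : Matrix (Fin n) (Fin n) ℝ) (hsymm : J₁ᵀ = J₁)
    (heig : ∀ μ ∈ spectrum ℝ J₁, 0 ≤ μ ∧ μ ≤ 1 - 1 / (2 * κ ^ 2)) :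
    let γ : ℝ := 1 + 1 / (2 * κ ^ 2) - Real.sqrt 2 / κ
    let J₂ : Matrix (Fin n ⊕ Fin n) (Fin n ⊕ Fin n) ℝ :=
      fromBlocks (γ • 1 + J₁) (-(γ • 1)) 1 0
    ∀ l ∈ spectrum ℂ (J₂.map (algebraMap ℝ ℂ)),
      ‖l‖ = Real.sqrt γ ∧
        Real.sqrt γ ≤ 1 - 1 / (2 * Real.sqrt 2 * κ) := by
  intro γ J₂ l hl
  have hκ0 : (0:ℝ) < κ := lt_of_lt_of_le two_pos hκ
  set s : ℝ := Real.sqrt 2 with hs_def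
  have hs2 : s ^ 2 = 2 := Real.sq_sqrt (by norm_num)
  have hs0 : (0:ℝ) < s := Real.sqrt_pos.mpr (by norm_num)
  have hs1 : 1 < s * κ := by nlinarith
  have hγeq : γ = (1 - 1/(s*κ))^2 := by
    show 1 + 1 / (2 * κ ^ 2) - s / κ = _
    field_simp
    linear_combination (1 - 2*s*κ) * hs2
  have hg_nonneg : (0:ℝ) ≤ 1 - 1/(s*κ) := by
    have : 1/(s*κ) < 1 := by
      rw [div_lt_one (by positivity)]; exact hs1
    linarith
  have hsqrtγ : Real.sqrt γ = 1 - 1/(s*κ) := by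
    rw [hγeq, Real.sqrt_sq hg_nonneg]
  have hγpos : (0:ℝ) < γ := by
    rw [hγeq]
    have : 0 < 1 - 1/(s*κ) := by
      have : 1/(s*κ) < 1 := by rw [div_lt_one (by positivity)]; exact hs1
      linarith
    positivity
  have hbound : Real.sqrt γ ≤ 1 - 1 / (2 * s * κ) := by
    rw [hsqrtγ]
    have h1 : 1 / (2*s*κ) ≤ 1/(s*κ) := by
      apply one_div_le_one_div_of_le (by positivity)
      nlinarith
    linarith
  refine ⟨?_, hbound⟩
  -- Hermitian structure of J₁
  have hH : J₁.IsHermitian := by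
    rw [Matrix.IsHermitian, Matrix.conjTranspose_eq_transpose_of_trivial]; exact hsymm
  set f := algebraMap ℝ ℂ with hf_def
  have hfc : ∀ r : ℝ, f r = (r : ℂ) := fun r => by
    rw [hf_def]; exact congrFun Complex.coe_algebraMap r
  set d : Fin n → ℝ := hH.eigenvalues with hd_def
  have hdspec : ∀ i, 0 ≤ d i ∧ d i ≤ 1 - 1 / (2 * κ ^ 2) := fun i =>
    heig _ (hH.eigenvalues_mem_spectrum_real i)
  set V : Matrix (Fin n) (Fin n) ℝ := (hH.eigenvectorUnitary : Matrix (Fin n) (Fin n) ℝ) with hV_def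
  have hVV : V * star V = 1 := (Matrix.mem_unitaryGroup_iff).mp hH.eigenvectorUnitary.2
  have hVV' : star V * V = 1 := (Matrix.mem_unitaryGroup_iff').mp hH.eigenvectorUnitary.2
  have hspec : J₁ = V * diagonal d * star V := by
    have := hH.spectral_theorem
    rwa [RCLike.ofReal_real_eq_id, Function.id_comp] at this
  set W : Matrix (Fin n) (Fin n) ℂ := V.map f with hW_def
  set W' : Matrix (Fin n) (Fin n) ℂ := (star V).map f with hW'_def
  have hone : (1 : Matrix (Fin n) (Fin n) ℝ).map f = 1 :=
    Matrix.map_one f (map_zero f) (map_one f)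
  have hWW : W * W' = 1 := by rw [hW_def, hW'_def, ← Matrix.map_mul, hVV, hone]
  have hWW' : W' * W = 1 := by rw [hW_def, hW'_def, ← Matrix.map_mul, hVV', hone]
  set u : (Matrix (Fin n) (Fin n) ℂ)ˣ := ⟨W, W', hWW, hWW'⟩ with hu_def
  have hDmap : (diagonal d).map f = diagonal (fun i => ((d i : ℝ) : ℂ)) :=
    Matrix.diagonal_map (map_zero f)
  have hJ₁C : J₁.map f = (u : Matrix (Fin n) (Fin n) ℂ) * diagonal (fun i => ((d i : ℝ) : ℂ)) * ((u⁻¹ : (Matrix (Fin n) (Fin n) ℂ)ˣ) : Matrix (Fin n) (Fin n) ℂ) := by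
    rw [hspec, Matrix.map_mul, Matrix.map_mul, hDmap]; rfl
  have hspecJ : spectrum ℂ (J₁.map f) = Set.range (fun i => ((d i : ℝ) : ℂ)) := by
    rw [hJ₁C, spectrum.units_conjugate, spectrum_diagonal]
  have hγC : ((γ : ℝ) : ℂ) ≠ 0 := by
    exact_mod_cast hγpos.ne'
  -- the block form of the mapped J₂
  have hsmul1 : ∀ c : ℝ, ((c • (1 : Matrix (Fin n) (Fin n) ℝ)).map f) = ((c : ℝ) : ℂ) • 1 := by
    intro c; ext i j
    by_cases h : i = j <;>
      simp [Matrix.one_apply, h, hfc]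
  have hM : J₂.map f =
      fromBlocks (((γ : ℝ) : ℂ) • 1 + J₁.map f) (-(((γ : ℝ) : ℂ) • 1)) 1 0 := by
    have hb11 : (γ • (1 : Matrix (Fin n) (Fin n) ℝ) + J₁).map f =
        ((γ : ℝ) : ℂ) • 1 + J₁.map f := by
      ext i j
      by_cases h : i = j <;>
        simp [Matrix.add_apply, Matrix.one_apply, h, hfc]
    have hb12 : (-(γ • (1 : Matrix (Fin n) (Fin n) ℝ))).map f = -(((γ : ℝ) : ℂ) • 1) := by
      ext i j
      by_cases h : i = j <;>
        simp [Matrix.one_apply, h, hfc]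
    have hb22 : (0 : Matrix (Fin n) (Fin n) ℝ).map f = 0 := by ext i j; simp
    show (fromBlocks (γ • 1 + J₁) (-(γ • 1)) 1 0).map f = _
    rw [Matrix.fromBlocks_map, hb11, hb12, hone, hb22]
  -- l ≠ 0
  have hl0 : l ≠ 0 := by
    rintro rfl
    have hiu : IsUnit (J₂.map f) := by
      set γc : ℂ := ((γ:ℝ):ℂ) with hγc_def
      set A' : Matrix (Fin n) (Fin n) ℂ := γc • 1 + J₁.map f with hA'_def
      refine ⟨⟨J₂.map f, fromBlocks 0 1 (-(γc⁻¹ • 1)) (γc⁻¹ • A'), ?_, ?_⟩, rfl⟩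
      · have h1 : A' * 0 + (-(γc • (1 : Matrix (Fin n) (Fin n) ℂ))) * (-(γc⁻¹ • 1)) = 1 := by
          rw [Matrix.mul_zero, zero_add, Matrix.neg_mul, Matrix.mul_neg, neg_neg,
            Matrix.smul_mul, Matrix.one_mul, smul_smul, mul_inv_cancel₀ hγC, one_smul]
        have h2 : A' * 1 + (-(γc • (1 : Matrix (Fin n) (Fin n) ℂ))) * (γc⁻¹ • A') = 0 := by
          rw [Matrix.mul_one, Matrix.neg_mul, Matrix.smul_mul, Matrix.one_mul, smul_smul,
            mul_inv_cancel₀ hγC, one_smul, add_neg_cancel]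
        have h3 : (1 : Matrix (Fin n) (Fin n) ℂ) * 0 + 0 * (-(γc⁻¹ • 1)) = 0 := by simp
        have h4 : (1 : Matrix (Fin n) (Fin n) ℂ) * 1 + 0 * (γc⁻¹ • A') = 1 := by simp
        rw [hM, Matrix.fromBlocks_multiply, h1, h2, h3, h4, Matrix.fromBlocks_one]
      · have g1 : (0 : Matrix (Fin n) (Fin n) ℂ) * A' + 1 * 1 = 1 := by simp
        have g2 : (0 : Matrix (Fin n) (Fin n) ℂ) * (-(γc • 1)) + 1 * 0 = 0 := by simp
        have g3 : (-(γc⁻¹ • (1 : Matrix (Fin n) (Fin n) ℂ))) * A' + (γc⁻¹ • A') * 1 = 0 := by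
          rw [Matrix.mul_one, Matrix.neg_mul, Matrix.smul_mul, Matrix.one_mul, neg_add_cancel]
        have g4 : (-(γc⁻¹ • (1 : Matrix (Fin n) (Fin n) ℂ))) * (-(γc • 1)) +
            (γc⁻¹ • A') * 0 = 1 := by
          rw [Matrix.mul_zero, add_zero, Matrix.neg_mul, Matrix.mul_neg, neg_neg,
            Matrix.smul_mul, Matrix.one_mul, smul_smul, inv_mul_cancel₀ hγC, one_smul]
        rw [hM, Matrix.fromBlocks_multiply, g1, g2, g3, g4, Matrix.fromBlocks_one]
    exact spectrum.not_isUnit_of_zero_mem _ hl hiu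
  have hlinv : l⁻¹ * l = 1 := inv_mul_cancel₀ hl0
  -- determinant computation
  have hmem : ¬ IsUnit (algebraMap ℂ (Matrix (Fin n ⊕ Fin n) (Fin n ⊕ Fin n) ℂ) l - J₂.map f) :=
    spectrum.mem_iff.mp hl
  have hblocks : algebraMap ℂ (Matrix (Fin n ⊕ Fin n) (Fin n ⊕ Fin n) ℂ) l - J₂.map f =
      fromBlocks ((l - γ) • 1 - J₁.map f) (((γ:ℝ):ℂ) • 1) (-1) (l • 1) := by
    rw [Algebra.algebraMap_eq_smul_one, ← Matrix.fromBlocks_one, Matrix.fromBlocks_smul, hM,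
      sub_eq_add_neg, Matrix.fromBlocks_neg, Matrix.fromBlocks_add]
    have e1 : l • (1 : Matrix (Fin n) (Fin n) ℂ) + -(((γ:ℝ):ℂ) • 1 + J₁.map f) =
        (l - ((γ:ℝ):ℂ)) • 1 - J₁.map f := by module
    have e2 : l • (0 : Matrix (Fin n) (Fin n) ℂ) + - -(((γ:ℝ):ℂ) • 1) = ((γ:ℝ):ℂ) • 1 := by
      simp
    have e3 : l • (0 : Matrix (Fin n) (Fin n) ℂ) + -(1 : Matrix (Fin n) (Fin n) ℂ) = -1 := by
      simp
    have e4 : l • (1 : Matrix (Fin n) (Fin n) ℂ) + -(0 : Matrix (Fin n) (Fin n) ℂ) = l • 1 := by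
      simp
    rw [e1, e2, e3, e4]
  haveI hDinv : Invertible (l • (1 : Matrix (Fin n) (Fin n) ℂ)) :=
    ⟨l⁻¹ • 1, by rw [smul_mul_smul_comm, hlinv, one_mul, one_smul],
      by rw [smul_mul_smul_comm, mul_inv_cancel₀ hl0, one_mul, one_smul]⟩
  have hinvOf : ⅟(l • (1 : Matrix (Fin n) (Fin n) ℂ)) = l⁻¹ • 1 :=
    invOf_eq_right_inv (by rw [smul_mul_smul_comm, mul_inv_cancel₀ hl0, one_mul, one_smul])
  have hdet0 : ((l - γ + γ * l⁻¹) • 1 - J₁.map f).det = 0 := by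
    have h0 : (algebraMap ℂ (Matrix (Fin n ⊕ Fin n) (Fin n ⊕ Fin n) ℂ) l - J₂.map f).det = 0 := by
      by_contra h
      exact hmem ((Matrix.isUnit_iff_isUnit_det _).mpr (isUnit_iff_ne_zero.mpr h))
    rw [hblocks, Matrix.det_fromBlocks₂₂, hinvOf] at h0
    have hschur : ((l - ↑γ) • 1 - J₁.map f) - ((γ:ℝ):ℂ) • 1 * (l⁻¹ • 1) * (-1) =
        (l - γ + γ * l⁻¹) • 1 - J₁.map f := by
      rw [Matrix.smul_mul, Matrix.one_mul, smul_smul, Matrix.mul_neg, Matrix.smul_mul,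
        Matrix.one_mul, sub_neg_eq_add, add_smul, sub_add_eq_add_sub]
    rw [hschur] at h0
    rcases mul_eq_zero.mp h0 with h | h
    · exfalso
      rw [Matrix.det_smul, Matrix.det_one, mul_one] at h
      exact pow_ne_zero _ hl0 h
    · exact h
  -- membership in the spectrum of J₁
  have hcmem : (l - γ + γ * l⁻¹) ∈ spectrum ℂ (J₁.map f) := by
    rw [spectrum.mem_iff, Algebra.algebraMap_eq_smul_one]
    intro h
    have := (Matrix.isUnit_iff_isUnit_det _).mp h
    rw [hdet0] at this
    exact this.ne_zero rfl
  rw [hspecJ] at hcmem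
  obtain ⟨i, hi⟩ := hcmem
  -- the quadratic equation
  have hquad : l ^ 2 - ((γ + d i : ℝ) : ℂ) * l + ((γ : ℝ) : ℂ) = 0 := by
    push_cast
    push_cast at hi
    linear_combination (-l) * hi - ((γ : ℝ) : ℂ) * hlinv
  -- bound on b = γ + d i
  have hgg : Real.sqrt γ ^ 2 = γ := Real.sq_sqrt hγpos.le
  have h2g : 2 * Real.sqrt γ - γ = 1 - 1 / (2 * κ ^ 2) := by
    rw [hsqrtγ]
    show 2 * (1 - 1/(s*κ)) - (1 + 1 / (2 * κ ^ 2) - s / κ) = 1 - 1 / (2 * κ ^ 2)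
    field_simp
    linear_combination (2*κ) * hs2
  have hb2 : (γ + d i) ^ 2 ≤ 4 * γ := by
    have h1 := (hdspec i).1
    have h2 := (hdspec i).2
    have h3 := Real.sqrt_nonneg γ
    have h4 : γ + d i ≤ 2 * Real.sqrt γ := by rw [← h2g] at h2; linarith
    have h5 : 0 ≤ γ + d i := by linarith
    calc (γ + d i) ^ 2 ≤ (2 * Real.sqrt γ) ^ 2 := by
          exact pow_le_pow_left₀ h5 h4 2
      _ = 4 * γ := by nlinarith [hgg]
  -- extract real and imaginary parts
  set x : ℝ := l.re with hx_def
  set y : ℝ := l.im with hy_def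
  set b : ℝ := γ + d i with hb_def
  have hre : x ^ 2 - y ^ 2 - b * x + γ = 0 := by
    have := congrArg Complex.re hquad
    simp [pow_two, Complex.mul_re, Complex.mul_im] at this
    linarith [this]
  have him : 2 * x * y - b * y = 0 := by
    have := congrArg Complex.im hquad
    simp [pow_two, Complex.mul_re, Complex.mul_im] at this
    linarith [this]
  have hnormSq : x ^ 2 + y ^ 2 = γ := by
    rcases eq_or_ne y 0 with hy | hy
    · rw [hy] at hre ⊢
      have h6 : (2 * x - b) ^ 2 = b ^ 2 - 4 * γ := by linear_combination 4 * hre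
      have h7 : (2 * x - b) ^ 2 = 0 := le_antisymm (by linarith) (sq_nonneg _)
      have h8 : 2 * x = b := by
        have := pow_eq_zero_iff (two_ne_zero) |>.mp h7
        linarith [this]
      linear_combination (-1 : ℝ) * hre + x * h8
    · have hxb : 2 * x = b := by
        have hy2 : y * (2 * x - b) = 0 := by linear_combination him
        rcases mul_eq_zero.mp hy2 with h | h
        · exact absurd h hy
        · linarith
      linear_combination (-1 : ℝ) * hre + x * hxb
  rw [Complex.norm_def, Complex.normSq_apply]
  rw [show l.re * l.re + l.im * l.im = x ^ 2 + y ^ 2 by rw [hx_def, hy_def]; ring, hnormSq]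
end
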